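/- For every fixed real w with w > 1 or w < −1, the function y ↦ (|w−y|^{α−1}/g(y))·∫₁^{z(w,y)} (u−1)^{αρ}(u+1)^{αρ̂−2} du tends to 0 as y → 1 from the right. -/

import Mathlib

open Real MeasureTheory Set Filter intervalIntegral
open scoped Topology

/-- `ψ_{αρ}(u) = (u−1)^{αρ̂−1}(u+1)^{αρ−1}` where `ρ̂ = 1 − ρ`. -/
noncomputable def psiRho (α ρ : ℝ) (u : ℝ) : ℝ :=
  (u - 1) ^ (α * (1 - ρ) - 1) * (u + 1) ^ (α * ρ - 1)

/-- `ψ_{αρ̂}(u) = (u−1)^{αρ−1}(u+1)^{αρ̂−1}` where `ρ̂ = 1 − ρ`. -/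
noncomputable def psiRhoHat (α ρ : ℝ) (u : ℝ) : ℝ :=
  (u - 1) ^ (α * ρ - 1) * (u + 1) ^ (α * (1 - ρ) - 1)

/-- `g(y) = (y−1)^{αρ}(y+1)^{αρ̂−1}`. -/
noncomputable def gfun (α ρ : ℝ) (y : ℝ) : ℝ :=
  (y - 1) ^ (α * ρ) * (y + 1) ^ (α * (1 - ρ) - 1)

/-- `z(x,y) = |xy−1|/|x−y|`. -/
noncomputable def zfun (x y : ℝ) : ℝ := |x * y - 1| / |x - y|

/-- `c_{αρ} = 2^{αρ}·π·αρ·Γ(αρ)/Γ(1−αρ̂)`. -/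
noncomputable def cRho (α ρ : ℝ) : ℝ :=
  2 ^ (α * ρ) * π * (α * ρ) * Real.Gamma (α * ρ) / Real.Gamma (1 - α * (1 - ρ))

/-- The harmonic function `v₁` (defined piecewise for `x > 1` and `x < −1`). -/
noncomputable def v1fun (α ρ : ℝ) (x : ℝ) : ℝ :=
  if 1 < x then
    Real.sin (π * (α * (1 - ρ))) *
      ((x + 1) * psiRho α ρ x - max (α - 1) 0 * ∫ u in (1:ℝ)..x, psiRho α ρ u)
  else
    Real.sin (π * (α * ρ)) *
      ((|x| - 1) * psiRhoHat α ρ |x| - max (α - 1) 0 * ∫ u in (1:ℝ)..|x|, psiRhoHat α ρ u)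

/-- The explicit Profeta–Simon Green function `U(x,y)` (for `x > y > 1` resp. `x < −1 < 1 < y`). -/
noncomputable def Ufun (α ρ : ℝ) (x y : ℝ) : ℝ :=
  if 1 < x then
    (2 ^ (1 - α) / (Real.Gamma (α * ρ) * Real.Gamma (α * (1 - ρ)))) *
      ((x - y) ^ (α - 1) * (∫ u in (1:ℝ)..zfun x y, psiRhoHat α ρ u)
        - max (α - 1) 0 * (∫ u in (1:ℝ)..y, psiRhoHat α ρ u) * ∫ u in (1:ℝ)..x, psiRho α ρ u)
  else
    (Real.sin (π * (α * ρ)) / Real.sin (π * (α * (1 - ρ)))) *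
    (2 ^ (1 - α) / (Real.Gamma (α * ρ) * Real.Gamma (α * (1 - ρ)))) *
      ((y - x) ^ (α - 1) * (∫ u in (1:ℝ)..zfun x y, psiRhoHat α ρ u)
        - max (α - 1) 0 * (∫ u in (1:ℝ)..y, psiRhoHat α ρ u) * ∫ u in (1:ℝ)..|x|, psiRhoHat α ρ u)

/-- For fixed `w` with `w > 1` or `w < −1`,
`(|w−y|^{α−1}/g(y))·∫₁^{z(w,y)} (u−1)^{αρ}(u+1)^{αρ̂−2} du → 0` as `y → 1⁺`. -/
theorem stmt_7 (α ρ : ℝ) (hα0 : 0 < α) (hα2 : α < 2) (hρ0 : 0 < ρ) (hρ1 : ρ < 1)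
    (hαρ : α * ρ < 1) (hαρh : α * (1 - ρ) < 1)
    (w : ℝ) (hw : 1 < w ∨ w < -1) :
    Tendsto (fun y : ℝ =>
        (|w - y| ^ (α - 1) / gfun α ρ y)
          * ∫ u in (1:ℝ)..zfun w y, (u - 1) ^ (α * ρ) * (u + 1) ^ (α * (1 - ρ) - 2))
      (𝓝[>] (1:ℝ)) (𝓝 0) := by
  have hαρ0 : 0 < α * ρ := mul_pos hα0 hρ0
  have hw1 : w - 1 ≠ 0 := by rcases hw with h | h <;> intro hc <;> nlinarith
  have hw1' : |w - 1| ≠ 0 := abs_ne_zero.mpr hw1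
  set c : ℝ := 2 ^ (α * (1 - ρ) - 2) with hc
  set C : ℝ → ℝ := fun y =>
    |w - y| ^ (α - 1) * c * (|w + 1| / |w - y|) ^ (1 + α * ρ) / (y + 1) ^ (α * (1 - ρ) - 1)
    with hC
  -- the upper bound function tends to 0
  have hCcont : ContinuousAt C 1 := by
    have habs : ContinuousAt (fun y : ℝ => |w - y|) 1 :=
      (continuous_const.sub continuous_id).abs.continuousAt
    have h1 : ContinuousAt (fun y : ℝ => |w - y| ^ (α - 1)) 1 :=
      habs.rpow_const (Or.inl hw1')
    have h2 : ContinuousAt (fun y : ℝ => (|w + 1| / |w - y|) ^ (1 + α * ρ)) 1 :=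
      (continuousAt_const.div habs hw1').rpow_const (Or.inr (by positivity))
    have h3 : ContinuousAt (fun y : ℝ => (y + 1) ^ (α * (1 - ρ) - 1)) 1 :=
      ((continuous_id.add continuous_const).continuousAt).rpow_const (Or.inl (by norm_num))
    have h4 : ((1:ℝ) + 1) ^ (α * (1 - ρ) - 1) ≠ 0 := by positivity
    exact ((h1.mul continuousAt_const).mul h2).div h3 h4
  have hB : Tendsto (fun y => (y - 1) * C y) (𝓝[>] (1:ℝ)) (𝓝 0) := by
    have h1 : Tendsto (fun y : ℝ => y - 1) (𝓝[>] (1:ℝ)) (𝓝 0) := by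
      have h : Tendsto (fun y : ℝ => y - 1) (𝓝 (1:ℝ)) (𝓝 (1 - 1)) :=
        (continuous_sub_right (1:ℝ)).tendsto 1
      simpa using h.mono_left nhdsWithin_le_nhds
    have h2 : Tendsto C (𝓝[>] (1:ℝ)) (𝓝 (C 1)) := hCcont.continuousWithinAt
    simpa using h1.mul h2
  set b : ℝ := if 1 < w then w else 2 with hb
  have hb1 : 1 < b := by
    rcases hw with h | h
    · rw [hb, if_pos h]; exact h
    · rw [hb, if_neg (by linarith)]; norm_num
  have hmem : Ioo (1:ℝ) b ∈ 𝓝[>] (1:ℝ) := Ioo_mem_nhdsGT_of_mem ⟨le_rfl, hb1⟩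
  have key : ∀ y ∈ Ioo (1:ℝ) b,
      0 ≤ (|w - y| ^ (α - 1) / gfun α ρ y)
        * (∫ u in (1:ℝ)..zfun w y, (u - 1) ^ (α * ρ) * (u + 1) ^ (α * (1 - ρ) - 2)) ∧
      (|w - y| ^ (α - 1) / gfun α ρ y)
        * (∫ u in (1:ℝ)..zfun w y, (u - 1) ^ (α * ρ) * (u + 1) ^ (α * (1 - ρ) - 2))
        ≤ (y - 1) * C y := by
    intro y hy
    obtain ⟨hy1, hyb⟩ := hy
    have hwy : 0 < |w - y| := by
      rcases hw with h | h
      · have hyw : y < w := by rw [hb, if_pos h] at hyb; exact hyb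
        rw [abs_of_pos (by linarith)]; linarith
      · rw [abs_of_neg (by linarith)]; linarith
    have hw1p : 0 < |w + 1| := by
      rcases hw with h | h
      · rw [abs_of_pos (by linarith)]; linarith
      · rw [abs_of_neg (by linarith)]; linarith
    set t : ℝ := |w + 1| / |w - y| with ht
    have htpos : 0 < t := div_pos hw1p hwy
    -- exact formula for z
    have habs : |w * y - 1| = |w - y| + (y - 1) * |w + 1| := by
      rcases hw with h | h
      · have hyw : y < w := by rw [hb, if_pos h] at hyb; exact hyb
        rw [abs_of_pos (by nlinarith : (0:ℝ) < w * y - 1),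
          abs_of_pos (by linarith : (0:ℝ) < w - y),
          abs_of_pos (by linarith : (0:ℝ) < w + 1)]
        ring
      · rw [abs_of_neg (by nlinarith : w * y - 1 < 0),
          abs_of_neg (by linarith : w - y < 0),
          abs_of_neg (by linarith : w + 1 < 0)]
        ring
    have hzf : zfun w y = 1 + (y - 1) * t := by
      rw [zfun, habs, ht]
      field_simp
    set z : ℝ := zfun w y with hzd
    have hz1 : 1 < z := by
      rw [hzf]
      nlinarith [mul_pos (by linarith : (0:ℝ) < y - 1) htpos]
    have hz1' : z - 1 = (y - 1) * t := by rw [hzf]; ring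
    have hg : 0 < gfun α ρ y := by
      simp only [gfun]
      exact mul_pos (Real.rpow_pos_of_pos (by linarith) _)
        (Real.rpow_pos_of_pos (by linarith) _)
    have hfrac : 0 ≤ |w - y| ^ (α - 1) / gfun α ρ y :=
      div_nonneg (Real.rpow_nonneg (abs_nonneg _) _) hg.le
    have hint_nonneg : 0 ≤ ∫ u in (1:ℝ)..z, (u - 1) ^ (α * ρ) * (u + 1) ^ (α * (1 - ρ) - 2) := by
      apply intervalIntegral.integral_nonneg hz1.le
      intro u hu
      exact mul_nonneg (Real.rpow_nonneg (by linarith [hu.1]) _)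
        (Real.rpow_nonneg (by linarith [hu.1]) _)
    refine ⟨mul_nonneg hfrac hint_nonneg, ?_⟩
    have hfc : ContinuousOn
        (fun u : ℝ => (u - 1) ^ (α * ρ) * (u + 1) ^ (α * (1 - ρ) - 2)) (Icc 1 z) := by
      intro u hu
      have h1 : ContinuousAt (fun u : ℝ => (u - 1) ^ (α * ρ)) u :=
        ((continuous_id.sub continuous_const).continuousAt).rpow_const (Or.inr hαρ0.le)
      have h2 : ContinuousAt (fun u : ℝ => (u + 1) ^ (α * (1 - ρ) - 2)) u :=
        ((continuous_id.add continuous_const).continuousAt).rpow_const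
          (Or.inl (by intro hcon; simp only [Pi.add_apply, id_eq] at hcon; nlinarith [hu.1]))
      exact (h1.mul h2).continuousWithinAt
    have hbound : ∀ u ∈ Icc (1:ℝ) z,
        (u - 1) ^ (α * ρ) * (u + 1) ^ (α * (1 - ρ) - 2) ≤ (z - 1) ^ (α * ρ) * c := by
      intro u hu
      obtain ⟨hu1, huz⟩ := hu
      have h1 : (u - 1) ^ (α * ρ) ≤ (z - 1) ^ (α * ρ) :=
        Real.rpow_le_rpow (by linarith) (by linarith) hαρ0.le
      have h2 : (u + 1) ^ (α * (1 - ρ) - 2) ≤ c := by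
        rw [hc]
        exact Real.rpow_le_rpow_of_nonpos (by norm_num) (by linarith) (by linarith)
      exact mul_le_mul h1 h2 (Real.rpow_nonneg (by linarith) _)
        (Real.rpow_nonneg (by linarith) _)
    have hI : (∫ u in (1:ℝ)..z, (u - 1) ^ (α * ρ) * (u + 1) ^ (α * (1 - ρ) - 2))
        ≤ (z - 1) * ((z - 1) ^ (α * ρ) * c) := by
      have hm := intervalIntegral.integral_mono_on hz1.le
        (hfc.intervalIntegrable_of_Icc hz1.le)
        (intervalIntegrable_const (μ := volume)) hbound
      calc (∫ u in (1:ℝ)..z, (u - 1) ^ (α * ρ) * (u + 1) ^ (α * (1 - ρ) - 2))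
          ≤ ∫ _ in (1:ℝ)..z, (z - 1) ^ (α * ρ) * c := hm
        _ = (z - 1) * ((z - 1) ^ (α * ρ) * c) := by
            rw [intervalIntegral.integral_const]; simp [smul_eq_mul]
    have hstep : |w - y| ^ (α - 1) / gfun α ρ y
          * ((z - 1) * ((z - 1) ^ (α * ρ) * c)) = (y - 1) * C y := by
      have e1 : (|w + 1| / |w - y|) ^ (1 + α * ρ) = t * t ^ (α * ρ) := by
        rw [← ht, Real.rpow_one_add' htpos.le (by positivity)]
      simp only [hC, gfun]
      rw [hz1', Real.mul_rpow (by linarith) htpos.le, e1]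
      have hy1p : (0:ℝ) < (y - 1) ^ (α * ρ) := Real.rpow_pos_of_pos (by linarith) _
      have hy2p : (0:ℝ) < (y + 1) ^ (α * (1 - ρ) - 1) := Real.rpow_pos_of_pos (by linarith) _
      field_simp
    calc |w - y| ^ (α - 1) / gfun α ρ y
        * (∫ u in (1:ℝ)..z, (u - 1) ^ (α * ρ) * (u + 1) ^ (α * (1 - ρ) - 2))
        ≤ |w - y| ^ (α - 1) / gfun α ρ y * ((z - 1) * ((z - 1) ^ (α * ρ) * c)) :=
          mul_le_mul_of_nonneg_left hI hfrac
      _ = (y - 1) * C y := hstep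
  refine squeeze_zero' ?_ ?_ hB
  · filter_upwards [hmem] with y hy using (key y hy).1
  · filter_upwards [hmem] with y hy using (key y hy).2
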